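/- Let G be an n-vertex graph such that α₁(G) + τ(G) > n²/4 while every proper induced subgraph H of G satisfies α₁(H) + τ(H) ≤ |V(H)|²/4 (i.e., G is a minimal counterexample to the Erdős–Gallai–Tuza conjecture). Then for every nonempty proper subset S of V(G), the edge cut satisfies |[S, S̄]| > |S|(n − |S|)/2. -/

import Mathlib

open Finset

/-- `A` is a triangle-independent set of edges of `G`: it consists of edges of `G`
and contains at most one edge from each triangle of `G`. -/
def TriIndep {V : Type*} (G : SimpleGraph V) (A : Finset (Sym2 V)) : Prop :=
  (A : Set (Sym2 V)) ⊆ G.edgeSet ∧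
    ∀ x y z : V, G.Adj x y → G.Adj y z → G.Adj x z →
      ¬(s(x, y) ∈ A ∧ s(y, z) ∈ A)

/-- `α₁ G`: the maximum size of a triangle-independent set of edges of `G`. -/
noncomputable def alpha1 {V : Type*} [Fintype V] (G : SimpleGraph V) : ℕ :=
  sSup {k | ∃ A : Finset (Sym2 V), TriIndep G A ∧ A.card = k}

/-- `τ G`: the minimum size of a set of edges whose deletion makes `G` triangle-free. -/
noncomputable def tau {V : Type*} [Fintype V] (G : SimpleGraph V) : ℕ :=
  sInf {k | ∃ X : Finset (Sym2 V), (X : Set (Sym2 V)) ⊆ G.edgeSet ∧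
    (G.deleteEdges (X : Set (Sym2 V))).CliqueFree 3 ∧ X.card = k}

/-- `τ_B G`: the minimum size of a set of edges whose deletion makes `G` bipartite. -/
noncomputable def tauB {V : Type*} [Fintype V] (G : SimpleGraph V) : ℕ :=
  sInf {k | ∃ X : Finset (Sym2 V), (X : Set (Sym2 V)) ⊆ G.edgeSet ∧
    (G.deleteEdges (X : Set (Sym2 V))).Colorable 2 ∧ X.card = k}

open scoped Classical in
/-- The edge cut `[S, S̄]`: the set of edges of `G` with one endpoint in `S`
and the other outside `S`. -/
noncomputable def edgeCut {V : Type*} [Fintype V] (G : SimpleGraph V) (S : Finset V) :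
    Finset (Sym2 V) :=
  G.edgeFinset.filter (fun e => ∃ x ∈ S, ∃ y ∉ S, e = s(x, y))

open scoped Classical in
/-- The number of edges of `G`. -/
noncomputable def edgeCount {V : Type*} [Fintype V] (G : SimpleGraph V) : ℕ :=
  G.edgeFinset.card

/-- The independence number of `G`. -/
noncomputable def indepNum {V : Type*} [Fintype V] (G : SimpleGraph V) : ℕ :=
  sSup {k | ∃ I : Finset V, (∀ x ∈ I, ∀ y ∈ I, ¬G.Adj x y) ∧ I.card = k}

/-- `K₄⁻`: the complete graph on 4 vertices with one edge deleted. -/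
def K4minus : SimpleGraph (Fin 4) := (SimpleGraph.completeGraph (Fin 4)).deleteEdges {s(0, 1)}

section Helpers

open SimpleGraph
open scoped Classical

lemma sym2_rep {α : Type*} (e : Sym2 α) : ∃ x y, e = s(x, y) :=
  Sym2.ind (fun x y => ⟨x, y, rfl⟩) e

variable {V : Type*} [Fintype V] (G : SimpleGraph V)

lemma alpha_bdd : BddAbove {k | ∃ A : Finset (Sym2 V), TriIndep G A ∧ A.card = k} :=
  ⟨Fintype.card (Sym2 V), by rintro k ⟨A, -, rfl⟩; exact Finset.card_le_univ A⟩

lemma alpha_exists : ∃ A : Finset (Sym2 V), TriIndep G A ∧ A.card = alpha1 G := by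
  have h : alpha1 G ∈ {k | ∃ A : Finset (Sym2 V), TriIndep G A ∧ A.card = k} :=
    Nat.sSup_mem ⟨0, ∅, ⟨by simp, by simp⟩, by simp⟩ (alpha_bdd G)
  obtain ⟨A, hA, hc⟩ := h
  exact ⟨A, hA, hc⟩

lemma le_alpha1 {A : Finset (Sym2 V)} (hA : TriIndep G A) : A.card ≤ alpha1 G :=
  le_csSup (alpha_bdd G) ⟨A, hA, rfl⟩

lemma tau_le {X : Finset (Sym2 V)} (h1 : (X : Set (Sym2 V)) ⊆ G.edgeSet)
    (h2 : (G.deleteEdges (X : Set (Sym2 V))).CliqueFree 3) : tau G ≤ X.card :=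
  Nat.sInf_le ⟨X, h1, h2, rfl⟩

lemma tau_exists : ∃ X : Finset (Sym2 V), (X : Set (Sym2 V)) ⊆ G.edgeSet ∧
    (G.deleteEdges (X : Set (Sym2 V))).CliqueFree 3 ∧ X.card = tau G := by
  have hne : {k | ∃ X : Finset (Sym2 V), (X : Set (Sym2 V)) ⊆ G.edgeSet ∧
      (G.deleteEdges (X : Set (Sym2 V))).CliqueFree 3 ∧ X.card = k}.Nonempty := by
    refine ⟨(Finset.univ.filter (· ∈ G.edgeSet)).card,
      Finset.univ.filter (· ∈ G.edgeSet), ?_, ?_, rfl⟩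
    · intro e he; simpa using he
    · intro t ht
      rw [SimpleGraph.is3Clique_iff] at ht
      obtain ⟨a, b, c, hab, -, -, -⟩ := ht
      rw [SimpleGraph.deleteEdges_adj] at hab
      exact hab.2 (by simp [hab.1])
  have h := Nat.sInf_mem hne
  obtain ⟨X, h1, h2, h3⟩ := h
  exact ⟨X, h1, h2, h3⟩

omit [Fintype V] in
lemma down_tau (T : Finset V) :
    ∃ X : Finset (Sym2 V), X.card = tau (G.induce (T : Set V)) ∧
      (X : Set (Sym2 V)) ⊆ G.edgeSet ∧
      (∀ x y z : V, x ∈ T → y ∈ T → z ∈ T → G.Adj x y → G.Adj y z → G.Adj x z →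
        s(x, y) ∈ X ∨ s(y, z) ∈ X ∨ s(x, z) ∈ X) := by
  obtain ⟨Y, hYsub, hYcf, hYcard⟩ := tau_exists (G.induce (T : Set V))
  have hinj : Function.Injective (Sym2.map (Subtype.val : ↥(T : Set V) → V)) :=
    Sym2.map.injective Subtype.val_injective
  refine ⟨Y.image (Sym2.map Subtype.val), ?_, ?_, ?_⟩
  · rw [Finset.card_image_of_injective _ hinj, hYcard]
  · intro e he
    simp only [Finset.coe_image, Set.mem_image, Finset.mem_coe] at he
    obtain ⟨e', he', rfl⟩ := he
    obtain ⟨a, b, rfl⟩ := sym2_rep e'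
    have h2 := hYsub (Finset.mem_coe.mpr he')
    rw [Sym2.map_pair_eq]
    simp only [SimpleGraph.mem_edgeSet] at h2 ⊢
    exact h2
  · intro x y z hx hy hz hxy hyz hxz
    by_contra hcon
    push_neg at hcon
    obtain ⟨c1, c2, c3⟩ := hcon
    have hx' : x ∈ (T : Set V) := by simpa using hx
    have hy' : y ∈ (T : Set V) := by simpa using hy
    have hz' : z ∈ (T : Set V) := by simpa using hz
    set a : (T : Set V) := ⟨x, hx'⟩
    set b : (T : Set V) := ⟨y, hy'⟩
    set c : (T : Set V) := ⟨z, hz'⟩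
    have h3 := hYcf {a, b, c}
    rw [SimpleGraph.is3Clique_triple_iff] at h3
    have hmem : ∀ (u w : (T : Set V)), G.Adj ↑u ↑w →
        s(↑u, ↑w) ∉ Y.image (Sym2.map Subtype.val) →
        ((G.induce (T : Set V)).deleteEdges (Y : Set (Sym2 (T : Set V)))).Adj u w := by
      intro u w huw hnot
      rw [SimpleGraph.deleteEdges_adj]
      refine ⟨huw, fun hin => hnot ?_⟩
      exact Finset.mem_image.mpr ⟨s(u, w), Finset.mem_coe.mp hin, by rw [Sym2.map_pair_eq]⟩
    exact h3 ⟨hmem a b hxy c1, hmem a c hxz c3, hmem b c hyz c2⟩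

lemma up_alpha (T : Finset V) {A : Finset (Sym2 V)} (hA : TriIndep G A) :
    (A.filter (fun e => ∀ v ∈ e, v ∈ T)).card ≤ alpha1 (G.induce (T : Set V)) := by
  have hinj : Function.Injective (Sym2.map (Subtype.val : ↥(T : Set V) → V)) :=
    Sym2.map.injective Subtype.val_injective
  set A₁ := A.preimage (Sym2.map (Subtype.val : ↥(T : Set V) → V)) hinj.injOn with hA₁
  have h1 : TriIndep (G.induce (T : Set V)) A₁ := by
    constructor
    · intro e he
      obtain ⟨a, b, rfl⟩ := sym2_rep e
      have hm : Sym2.map Subtype.val s(a, b) ∈ A := Finset.mem_preimage.mp (Finset.mem_coe.mp he)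
      have h2 := hA.1 (Finset.mem_coe.mpr hm)
      rw [Sym2.map_pair_eq] at h2
      simp only [SimpleGraph.mem_edgeSet] at h2 ⊢
      exact h2
    · rintro x y z hxy hyz hxz ⟨m1, m2⟩
      rw [Finset.mem_preimage, Sym2.map_pair_eq] at m1 m2
      exact hA.2 ↑x ↑y ↑z hxy hyz hxz ⟨m1, m2⟩
  refine le_trans ?_ (le_alpha1 _ h1)
  have hsub : A.filter (fun e => ∀ v ∈ e, v ∈ T) ⊆ A₁.image (Sym2.map Subtype.val) := by
    intro e he
    rw [Finset.mem_filter] at he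
    obtain ⟨a, b, rfl⟩ := sym2_rep e
    have ha : a ∈ T := he.2 a (Sym2.mem_mk_left a b)
    have hb : b ∈ T := he.2 b (Sym2.mem_mk_right a b)
    refine Finset.mem_image.mpr
      ⟨s((⟨a, by simpa using ha⟩ : (T : Set V)), (⟨b, by simpa using hb⟩ : (T : Set V))), ?_, ?_⟩
    · rw [Finset.mem_preimage, Sym2.map_pair_eq]; exact he.1
    · rw [Sym2.map_pair_eq]
  calc (A.filter (fun e => ∀ v ∈ e, v ∈ T)).card
      ≤ (A₁.image (Sym2.map Subtype.val)).card := Finset.card_le_card hsub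
    _ = A₁.card := Finset.card_image_of_injective _ hinj

end Helpers

/-- If `G` is a minimal counterexample to the Erdős–Gallai–Tuza conjecture
(`α₁(G) + τ(G) > n²/4` but every proper induced subgraph satisfies the conjecture),
then every nonempty proper vertex subset `S` satisfies `|[S, S̄]| > |S|(n − |S|)/2`. -/
theorem stmt1 {V : Type*} [Fintype V] (G : SimpleGraph V) (n : ℕ)
    (hn : Fintype.card V = n)
    (hctx : (alpha1 G + tau G : ℝ) > n ^ 2 / 4)
    (hmin : ∀ S : Finset V, S ≠ Finset.univ →
      (alpha1 (G.induce (S : Set V)) + tau (G.induce (S : Set V)) : ℝ) ≤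
        (S.card : ℝ) ^ 2 / 4)
    (S : Finset V) (hS : S.Nonempty) (hSu : S ≠ Finset.univ) :
    ((edgeCut G S).card : ℝ) > S.card * (n - S.card) / 2 := by
  classical
  obtain ⟨A, hA, hAcard⟩ := alpha_exists G
  obtain ⟨X₁, hX₁card, hX₁sub, hX₁tri⟩ := down_tau G S
  obtain ⟨X₂, hX₂card, hX₂sub, hX₂tri⟩ := down_tau G Sᶜ
  set cut := edgeCut G S with hcut
  have hcutmem : ∀ u v : V, G.Adj u v → u ∈ S → v ∉ S → s(u, v) ∈ cut := by
    intro u v huv hu hv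
    rw [hcut, edgeCut, Finset.mem_filter]
    exact ⟨SimpleGraph.mem_edgeFinset.mpr (G.mem_edgeSet.mpr huv), u, hu, v, hv, rfl⟩
  -- the tau bound
  set X : Finset (Sym2 V) := X₁ ∪ X₂ ∪ (cut \ A) with hX
  have hXsub : (X : Set (Sym2 V)) ⊆ G.edgeSet := by
    intro e he
    rw [Finset.mem_coe, hX, Finset.mem_union, Finset.mem_union] at he
    rcases he with (h | h) | h
    · exact hX₁sub (Finset.mem_coe.mpr h)
    · exact hX₂sub (Finset.mem_coe.mpr h)
    · have h2 := (Finset.mem_sdiff.mp h).1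
      rw [hcut, edgeCut, Finset.mem_filter] at h2
      exact SimpleGraph.mem_edgeFinset.mp h2.1
  have hXcf : (G.deleteEdges (X : Set (Sym2 V))).CliqueFree 3 := by
    intro t ht
    rw [SimpleGraph.is3Clique_iff] at ht
    obtain ⟨x, y, z, hxy, hxz, hyz, rfl⟩ := ht
    rw [SimpleGraph.deleteEdges_adj] at hxy hxz hyz
    have hnot : ∀ u v : V, s(u, v) ∉ (X : Set (Sym2 V)) →
        s(u, v) ∉ X₁ ∧ s(u, v) ∉ X₂ ∧ s(u, v) ∉ cut \ A := by
      intro u v h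
      rw [Finset.mem_coe, hX, Finset.mem_union, Finset.mem_union] at h
      push_neg at h
      exact ⟨h.1.1, h.1.2, h.2⟩
    obtain ⟨nxy1, nxy2, nxy3⟩ := hnot x y hxy.2
    obtain ⟨nxz1, nxz2, nxz3⟩ := hnot x z hxz.2
    obtain ⟨nyz1, nyz2, nyz3⟩ := hnot y z hyz.2
    have hcross : ∀ u v : V, G.Adj u v → s(u, v) ∉ cut \ A → u ∈ S → v ∉ S →
        s(u, v) ∈ A := by
      intro u v huv hnm hu hv
      by_contra hna
      exact hnm (Finset.mem_sdiff.mpr ⟨hcutmem u v huv hu hv, hna⟩)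
    have swapmem : ∀ (u v : V) (B : Finset (Sym2 V)), s(u, v) ∈ B → s(v, u) ∈ B := by
      intro u v B h; rwa [Sym2.eq_swap] at h
    by_cases hx : x ∈ S <;> by_cases hy : y ∈ S <;> by_cases hz : z ∈ S
    · rcases hX₁tri x y z hx hy hz hxy.1 hyz.1 hxz.1 with h | h | h
      exacts [nxy1 h, nyz1 h, nxz1 h]
    · -- x ∈ S, y ∈ S, z ∉ S : crossing edges s(x,z), s(y,z)
      have a1 : s(x, z) ∈ A := hcross x z hxz.1 nxz3 hx hz
      have a2 : s(y, z) ∈ A := hcross y z hyz.1 nyz3 hy hz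
      exact hA.2 x z y hxz.1 hyz.1.symm hxy.1 ⟨a1, swapmem y z A a2⟩
    · -- x ∈ S, y ∉ S, z ∈ S : crossing edges s(x,y), s(z,y)
      have a1 : s(x, y) ∈ A := hcross x y hxy.1 nxy3 hx hy
      have a2 : s(z, y) ∈ A := hcross z y hyz.1.symm (fun h => nyz3 (swapmem z y _ h)) hz hy
      exact hA.2 x y z hxy.1 hyz.1 hxz.1 ⟨a1, swapmem z y A a2⟩
    · -- x ∈ S, y ∉ S, z ∉ S : crossing edges s(x,y), s(x,z)
      have a1 : s(x, y) ∈ A := hcross x y hxy.1 nxy3 hx hy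
      have a2 : s(x, z) ∈ A := hcross x z hxz.1 nxz3 hx hz
      exact hA.2 y x z hxy.1.symm hxz.1 hyz.1 ⟨swapmem x y A a1, a2⟩
    · -- x ∉ S, y ∈ S, z ∈ S : crossing edges s(y,x), s(z,x)
      have a1 : s(y, x) ∈ A := hcross y x hxy.1.symm (fun h => nxy3 (swapmem y x _ h)) hy hx
      have a2 : s(z, x) ∈ A := hcross z x hxz.1.symm (fun h => nxz3 (swapmem z x _ h)) hz hx
      exact hA.2 y x z hxy.1.symm hxz.1 hyz.1 ⟨a1, swapmem z x A a2⟩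
    · -- x ∉ S, y ∈ S, z ∉ S : crossing edges s(y,x), s(y,z)
      have a1 : s(y, x) ∈ A := hcross y x hxy.1.symm (fun h => nxy3 (swapmem y x _ h)) hy hx
      have a2 : s(y, z) ∈ A := hcross y z hyz.1 nyz3 hy hz
      exact hA.2 x y z hxy.1 hyz.1 hxz.1 ⟨swapmem y x A a1, a2⟩
    · -- x ∉ S, y ∉ S, z ∈ S : crossing edges s(z,x), s(z,y)
      have a1 : s(z, x) ∈ A := hcross z x hxz.1.symm (fun h => nxz3 (swapmem z x _ h)) hz hx
      have a2 : s(z, y) ∈ A := hcross z y hyz.1.symm (fun h => nyz3 (swapmem z y _ h)) hz hy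
      exact hA.2 x z y hxz.1 hyz.1.symm hxy.1 ⟨swapmem z x A a1, a2⟩
    · rcases hX₂tri x y z (Finset.mem_compl.mpr hx) (Finset.mem_compl.mpr hy)
        (Finset.mem_compl.mpr hz) hxy.1 hyz.1 hxz.1 with h | h | h
      exacts [nxy2 h, nyz2 h, nxz2 h]
  have htau : tau G ≤ X₁.card + X₂.card + (cut \ A).card := by
    refine le_trans (tau_le G hXsub hXcf) ?_
    rw [hX]
    exact le_trans (Finset.card_union_le _ _)
      (by exact Nat.add_le_add_right (Finset.card_union_le _ _) _)
  -- the alpha bound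
  have hsubA : A ⊆ (A.filter (fun e => ∀ v ∈ e, v ∈ S)) ∪
      (A.filter (fun e => ∀ v ∈ e, v ∈ Sᶜ)) ∪ (cut ∩ A) := by
    intro e he
    obtain ⟨x, y, rfl⟩ := sym2_rep e
    have hadj : G.Adj x y := G.mem_edgeSet.mp (hA.1 (Finset.mem_coe.mpr he))
    rw [Finset.mem_union, Finset.mem_union]
    by_cases hx : x ∈ S <;> by_cases hy : y ∈ S
    · refine Or.inl (Or.inl (Finset.mem_filter.mpr ⟨he, fun v hv => ?_⟩))
      rcases Sym2.mem_iff.mp hv with rfl | rfl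
      exacts [hx, hy]
    · exact Or.inr (Finset.mem_inter.mpr ⟨hcutmem x y hadj hx hy, he⟩)
    · refine Or.inr (Finset.mem_inter.mpr ⟨?_, he⟩)
      have := hcutmem y x hadj.symm hy hx
      rwa [Sym2.eq_swap] at this
    · refine Or.inl (Or.inr (Finset.mem_filter.mpr ⟨he, fun v hv => ?_⟩))
      rcases Sym2.mem_iff.mp hv with rfl | rfl
      exacts [Finset.mem_compl.mpr hx, Finset.mem_compl.mpr hy]
  have halpha : alpha1 G ≤ (A.filter (fun e => ∀ v ∈ e, v ∈ S)).card +
      (A.filter (fun e => ∀ v ∈ e, v ∈ Sᶜ)).card + (cut ∩ A).card := by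
    rw [← hAcard]
    refine le_trans (Finset.card_le_card hsubA) ?_
    exact le_trans (Finset.card_union_le _ _)
      (Nat.add_le_add_right (Finset.card_union_le _ _) _)
  have hup1 := up_alpha G S hA
  have hup2 := up_alpha G Sᶜ hA
  -- cardinality bookkeeping
  have hcm : (cut ∩ A).card ≤ cut.card := Finset.card_le_card Finset.inter_subset_left
  have hsd : (cut \ A).card = cut.card - (cut ∩ A).card := by
    rw [← Finset.sdiff_inter_self_left, Finset.card_sdiff_of_subset Finset.inter_subset_left]
  have hNat : alpha1 G + tau G ≤
      (alpha1 (G.induce (S : Set V)) + tau (G.induce (S : Set V))) +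
      (alpha1 (G.induce ((Sᶜ : Finset V) : Set V)) + tau (G.induce ((Sᶜ : Finset V) : Set V))) +
      cut.card := by
    rw [hX₁card] at htau
    rw [hX₂card] at htau
    rw [hsd] at htau
    omega
  -- pass to the reals
  have hScne : (Sᶜ : Finset V) ≠ Finset.univ := by
    obtain ⟨v, hv⟩ := hS
    intro h
    have : v ∈ Sᶜ := h ▸ Finset.mem_univ v
    exact (Finset.mem_compl.mp this) hv
  have h1 := hmin S hSu
  have h2 := hmin Sᶜ hScne
  rw [Finset.card_compl, hn] at h2
  have hsn : S.card ≤ n := hn ▸ Finset.card_le_univ S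
  have hcast : ((n - S.card : ℕ) : ℝ) = (n : ℝ) - S.card := by
    rw [Nat.cast_sub hsn]
  have hR : (alpha1 G + tau G : ℝ) ≤
      (alpha1 (G.induce (S : Set V)) + tau (G.induce (S : Set V)) : ℝ) +
      (alpha1 (G.induce ((Sᶜ : Finset V) : Set V)) + tau (G.induce ((Sᶜ : Finset V) : Set V)) : ℝ) +
      (cut.card : ℝ) := by
    push_cast
    exact_mod_cast Nat.cast_le.mpr hNat
  rw [hcast] at h2
  nlinarith [hctx, h1, h2, hR, hsn, sq_nonneg ((n : ℝ) - S.card)]
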